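/- Every r-uniform hypergraph with chromatic number greater than 2 contains two edges intersecting in exactly one vertex. -/

import Mathlib

open Finset

structure FinHypergraph (V : Type*) where
  edges : Finset (Finset V)

namespace FinHypergraph

variable {V : Type*} [DecidableEq V]

/-- `H` is `r`-uniform: every edge has exactly `r` vertices. -/
def Uniform (H : FinHypergraph V) (r : ℕ) : Prop := ∀ e ∈ H.edges, e.card = r

/-- Two vertices are adjacent if some edge contains both. -/
def adj (H : FinHypergraph V) (u w : V) : Prop := ∃ e ∈ H.edges, u ∈ e ∧ w ∈ e

/-- `H` is connected: any two vertices are joined by a walk. -/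
def Connected (H : FinHypergraph V) : Prop := ∀ u w : V, Relation.ReflTransGen H.adj u w

/-- No two distinct edges intersect in more than one vertex. -/
def Linear (H : FinHypergraph V) : Prop :=
  ∀ e ∈ H.edges, ∀ f ∈ H.edges, e ≠ f → (e ∩ f).card ≤ 1

/-- A Berge cycle: distinct vertices `v 0, …, v (k-1)` and distinct edges
`e 0, …, e (k-1)`, `k ≥ 2`, with `{v i, v (i+1)} ⊆ e i` cyclically. -/
def HasBergeCycle (H : FinHypergraph V) : Prop :=
  ∃ k : ℕ, ∃ _ : 2 ≤ k, ∃ (v : Fin k → V) (e : Fin k → Finset V),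
    Function.Injective v ∧ Function.Injective e ∧
    (∀ i, e i ∈ H.edges) ∧
    (∀ i : Fin k, v i ∈ e i ∧ v ⟨(i.val + 1) % k, Nat.mod_lt _ (by omega)⟩ ∈ e i)

/-- A hypertree: connected, linear, with no Berge cycle. -/
def IsHypertree (H : FinHypergraph V) : Prop :=
  H.Connected ∧ H.Linear ∧ ¬ H.HasBergeCycle

/-- A proper coloring: no edge is monochromatic. -/
def Proper (H : FinHypergraph V) {k : ℕ} (c : V → Fin k) : Prop :=
  ∀ e ∈ H.edges, ¬ ∀ u ∈ e, ∀ w ∈ e, c u = c w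

/-- The chromatic number: least number of colors in a proper coloring. -/
noncomputable def chromaticNumber (H : FinHypergraph V) : ℕ :=
  sInf {k | ∃ c : V → Fin k, H.Proper c}

/-- `H` contains a copy of `T`: an injective vertex map sending edges to edges. -/
def ContainsCopy {W : Type*} [DecidableEq W] (H : FinHypergraph V) (T : FinHypergraph W) : Prop :=
  ∃ φ : W → V, Function.Injective φ ∧ ∀ e ∈ T.edges, e.image φ ∈ H.edges

end FinHypergraph

/-- The complete `r`-uniform hypergraph on `Fin n`. -/
def completeHypergraph (n r : ℕ) : FinHypergraph (Fin n) :=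
  ⟨Finset.univ.powersetCard r⟩

/-- Every `r`-uniform hypergraph with chromatic number greater than `2` contains two
edges intersecting in exactly one vertex. -/
theorem stmt5 {V : Type*} [Fintype V] [DecidableEq V] (r : ℕ) (hr : 2 ≤ r)
    (H : FinHypergraph V) (hH : H.Uniform r) (hchi : 2 < H.chromaticNumber) :
    ∃ e ∈ H.edges, ∃ f ∈ H.edges, e ≠ f ∧ (e ∩ f).card = 1 := by
  by_contra h
  push_neg at h
  -- no two distinct edges intersect in exactly one vertex
  have hint : ∀ e ∈ H.edges, ∀ f ∈ H.edges, e ≠ f → (e ∩ f).Nonempty →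
      1 < (e ∩ f).card := by
    intro e he f hf hef ⟨x, hx⟩
    have h1 : 1 ≤ (e ∩ f).card := Finset.card_pos.mpr ⟨x, hx⟩
    have h2 := h e he f hf hef
    omega
  classical
  -- the monochromatic edges of a coloring
  set M : (V → Fin 2) → Finset (Finset V) :=
    fun c => H.edges.filter (fun e => ∀ u ∈ e, ∀ w ∈ e, c u = c w) with hM
  -- choose a coloring minimizing the number of monochromatic edges
  obtain ⟨c, -, hmin⟩ := Finset.exists_min_image (Finset.univ : Finset (V → Fin 2))
    (fun c => (M c).card) ⟨fun _ => 0, Finset.mem_univ _⟩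
  have hMempty : M c = ∅ := by
    by_contra hne
    obtain ⟨e, he⟩ := Finset.nonempty_iff_ne_empty.mpr hne
    rw [hM, Finset.mem_filter] at he
    obtain ⟨heE, hemono⟩ := he
    have hecard : e.card = r := hH e heE
    have hepos : 1 < e.card := by omega
    obtain ⟨x, hx⟩ : e.Nonempty := Finset.card_pos.mp (by omega)
    -- flip the color of x
    set c' : V → Fin 2 := fun v => if v = x then c x + 1 else c v with hc'
    have hflip : c' x ≠ c x := by
      simp only [hc', if_pos rfl]
      have : ∀ a : Fin 2, a + 1 ≠ a := by decide
      exact this _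
    -- any edge monochromatic under c' doesn't contain x
    have hkey : ∀ f ∈ M c', x ∉ f := by
      intro f hf hxf
      rw [hM, Finset.mem_filter] at hf
      obtain ⟨hfE, hfmono⟩ := hf
      by_cases hfe : f = e
      · subst hfe
        obtain ⟨y, hy, hyx⟩ := Finset.exists_mem_ne hepos x
        have h1 : c' y = c' x := hfmono y hy x hxf
        have h2 : c' y = c y := by simp [hc', hyx]
        have h3 : c y = c x := hemono y hy x hx
        exact hflip (by rw [← h1, h2, h3])
      · have hne : (f ∩ e).Nonempty := ⟨x, Finset.mem_inter.mpr ⟨hxf, hx⟩⟩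
        have hlt := hint f hfE e heE hfe hne
        obtain ⟨y, hy, hyx⟩ := Finset.exists_mem_ne hlt x
        rw [Finset.mem_inter] at hy
        have h1 : c' y = c' x := hfmono y hy.1 x hxf
        have h2 : c' y = c y := by simp [hc', hyx]
        have h3 : c y = c x := hemono y hy.2 x hx
        exact hflip (by rw [← h1, h2, h3])
    -- hence M c' ⊆ M c, and e ∈ M c \ M c'
    have hsub : M c' ⊆ M c := by
      intro f hf
      have hxf := hkey f hf
      rw [hM, Finset.mem_filter] at hf ⊢
      refine ⟨hf.1, fun u hu w hw => ?_⟩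
      have h1 := hf.2 u hu w hw
      have hux : u ≠ x := fun h => hxf (h ▸ hu)
      have hwx : w ≠ x := fun h => hxf (h ▸ hw)
      simpa [hc', hux, hwx] using h1
    have heM : e ∈ M c := by rw [hM, Finset.mem_filter]; exact ⟨heE, hemono⟩
    have heM' : e ∉ M c' := fun hf => hkey e hf hx
    have hss : M c' ⊂ M c := ⟨hsub, fun hsub' => heM' (hsub' heM)⟩
    have := hmin c' (Finset.mem_univ _)
    have := Finset.card_lt_card hss
    omega
  -- so c is a proper 2-coloring, contradicting chromatic number > 2
  have hproper : H.Proper c := by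
    intro e heE hmono
    have : e ∈ M c := by rw [hM, Finset.mem_filter]; exact ⟨heE, hmono⟩
    rw [hMempty] at this
    exact absurd this (Finset.notMem_empty e)
  have h2mem : 2 ∈ {k | ∃ c : V → Fin k, H.Proper c} := ⟨c, hproper⟩
  have := Nat.sInf_le h2mem
  unfold FinHypergraph.chromaticNumber at hchi
  omega
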